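/- Let β ⊆ α be compositions with N = |α|−|β| ≥ 1. Then: (1) whenever S, T ∈ SIT(α/β) with T = π_i^{rdI}(S) and T ≠ S, one has inv(T) = inv(S) + 1, so the poset on SIT(α/β) generated by the operators π_i^{rdI} is graded with rank function T ↦ inv(T) − inv(S^0_{α/β}); (2) inv(S^{row}_{α/β}) = C(N, 2); (3) inv(S^0_{α/β}) = Σ_{i=1}^{ℓ(β)} C(α_i − β_i, 2) + Σ_{i=ℓ(β)+1}^{ℓ(α)} C(α_i + i − ℓ(β) − 1, 2) − C(ℓ(α) − ℓ(β), 3); hence the total rank of the poset is C(N,2) − Σ_{i=1}^{ℓ(β)} C(α_i − β_i, 2) − Σ_{i=ℓ(β)+1}^{ℓ(α)} C(α_i + i − ℓ(β) − 1, 2) + C(ℓ(α) − ℓ(β), 3). Here C(a,b) denotes the binomial coefficient a choose b. -/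

import Mathlib

open scoped Classical

namespace ImmaculateSkew

/-- `part α i` is the `i`-th part (0-indexed) of the composition `α`, or `0` if out of range. -/
def part (α : List ℕ) (i : ℕ) : ℕ := α.getD i 0

/-- a composition: a list of positive integers -/
def IsComposition (α : List ℕ) : Prop := ∀ x ∈ α, 0 < x

/-- `β ⊆ α` for compositions -/
def SubComp (β α : List ℕ) : Prop :=
  β.length ≤ α.length ∧ ∀ j < β.length, part β j ≤ part α j

/-- cell `(i, j)` (row `i` from the bottom, column `j`, both 0-indexed) lies in the diagram of `α` -/
def InDiagram (α : List ℕ) (c : ℕ × ℕ) : Prop :=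
  c.1 < α.length ∧ c.2 < part α c.1

/-- cell lies in the skew diagram `α/β` -/
def InSkew (α β : List ℕ) (c : ℕ × ℕ) : Prop :=
  InDiagram α c ∧ ¬ InDiagram β c

/-- the finite set of cells of the skew diagram `α/β` -/
noncomputable def skewCells (α β : List ℕ) : Finset (ℕ × ℕ) :=
  (Finset.range α.length ×ˢ Finset.range (α.sum + 1)).filter (InSkew α β)

/-- `N = |α| - |β|` -/
def skewSize (α β : List ℕ) : ℕ := α.sum - β.sum

/-- a filling of the cells of `α/β` using each entry of `E` exactly once, zero off the diagram -/
structure IsStdOn (α β : List ℕ) (E : Finset ℕ) (T : ℕ × ℕ → ℕ) : Prop where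
  zero_off : ∀ c, ¬ InSkew α β c → T c = 0
  mem : ∀ c, InSkew α β c → T c ∈ E
  inj : ∀ c c', InSkew α β c → InSkew α β c' → T c = T c' → c = c'
  surj : ∀ v ∈ E, ∃ c, InSkew α β c ∧ T c = v

/-- row entries strictly increase left to right -/
def RowsStrict (α β : List ℕ) (T : ℕ × ℕ → ℕ) : Prop :=
  ∀ i j j', j < j' → InSkew α β (i, j) → InSkew α β (i, j') → T (i, j) < T (i, j')

/-- row entries weakly increase left to right -/
def RowsWeak (α β : List ℕ) (T : ℕ × ℕ → ℕ) : Prop :=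
  ∀ i j j', j < j' → InSkew α β (i, j) → InSkew α β (i, j') → T (i, j) ≤ T (i, j')

/-- all column entries strictly increase bottom to top -/
def ColsStrict (α β : List ℕ) (T : ℕ × ℕ → ℕ) : Prop :=
  ∀ i i' j, i < i' → InSkew α β (i, j) → InSkew α β (i', j) → T (i, j) < T (i', j)

/-- all column entries weakly increase bottom to top -/
def ColsWeak (α β : List ℕ) (T : ℕ × ℕ → ℕ) : Prop :=
  ∀ i i' j, i < i' → InSkew α β (i, j) → InSkew α β (i', j) → T (i, j) ≤ T (i', j)

/-- the column-1 entries (those in `α/β`) strictly increase bottom to top -/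
def FirstColStrict (α β : List ℕ) (T : ℕ × ℕ → ℕ) : Prop :=
  ∀ i i', i < i' → InSkew α β (i, 0) → InSkew α β (i', 0) → T (i, 0) < T (i', 0)

/-- the column-1 entries (those in `α/β`) weakly increase bottom to top -/
def FirstColWeak (α β : List ℕ) (T : ℕ × ℕ → ℕ) : Prop :=
  ∀ i i', i < i' → InSkew α β (i, 0) → InSkew α β (i', 0) → T (i, 0) ≤ T (i', 0)

/-- standard immaculate tableau of shape `α/β` with entry set `E` -/
def IsSITOn (α β : List ℕ) (E : Finset ℕ) (T : ℕ × ℕ → ℕ) : Prop :=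
  IsStdOn α β E T ∧ RowsStrict α β T ∧ FirstColStrict α β T

/-- standard immaculate tableau of shape `α/β` (entries `1, …, N`) -/
def IsSIT (α β : List ℕ) (T : ℕ × ℕ → ℕ) : Prop :=
  IsSITOn α β (Finset.Icc 1 (skewSize α β)) T

/-- standard extended tableau: all columns increase bottom to top -/
def IsSET (α β : List ℕ) (T : ℕ × ℕ → ℕ) : Prop :=
  IsSIT α β T ∧ ColsStrict α β T

/-- the four descent-set variants -/
inductive Variant | dI | rdI | Astar | Abar

/-- `rowRel a r r'`: the relation required between the row `r` containing `i` and the row `r'`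
containing `i+1` for `i` to be an `a`-descent -/
def rowRel : Variant → ℕ → ℕ → Prop
  | .dI    => fun r r' => r < r'
  | .rdI   => fun r r' => r' ≤ r
  | .Astar => fun r r' => r' < r
  | .Abar  => fun r r' => r ≤ r'

/-- the `a`-descent set of a tableau -/
noncomputable def Des (a : Variant) (α β : List ℕ) (T : ℕ × ℕ → ℕ) : Finset ℕ :=
  (Finset.Icc 1 (skewSize α β - 1)).filter fun k =>
    ∃ c c', InSkew α β c ∧ InSkew α β c' ∧ T c = k ∧ T c' = k + 1 ∧ rowRel a c.1 c'.1

/-- interchange the entries `i` and `i+1` -/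
def swapEntries (i : ℕ) (T : ℕ × ℕ → ℕ) : ℕ × ℕ → ℕ :=
  fun c => if T c = i then i + 1 else if T c = i + 1 then i else T c

/-- the 0-Hecke operator `π_i^a` on `SIT(α/β) ∪ {0}` (the zero function plays the role of `0`) -/
noncomputable def piOp (a : Variant) (α β : List ℕ) (i : ℕ) (T : ℕ × ℕ → ℕ) : ℕ × ℕ → ℕ :=
  if i ∈ Des a α β T then
    (if IsSIT α β (swapEntries i T) then swapEntries i T else fun _ => 0)
  else T

/-- the fundamental quasisymmetric function `F_{comp(D)}` for `D ⊆ {1,…,N-1}`, as a power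
series in the variables `x_1, x_2, …` (variable `x_n` is `X n`; `x_0` is unused) -/
noncomputable def Fund (N : ℕ) (D : Finset ℕ) : MvPowerSeries ℕ ℚ :=
  fun d => (Nat.card {f : Fin N → ℕ //
    (∀ j, 1 ≤ f j) ∧
    (∀ j k : Fin N, j ≤ k → f j ≤ f k) ∧
    (∀ (j : ℕ) (_ : 1 ≤ j) (h2 : j < N), j ∈ D → f ⟨j - 1, by omega⟩ < f ⟨j, h2⟩) ∧
    (∑ j, Finsupp.single (f j) 1) = d} : ℚ)

/-- the generating function `Σ_T x^T` over all fillings of the given cells with positive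
integers satisfying the predicate `P` (and equal to `0` off the given cells) -/
noncomputable def genF (cs : Finset (ℕ × ℕ)) (P : (ℕ × ℕ → ℕ) → Prop) :
    MvPowerSeries ℕ ℚ :=
  fun d => (Nat.card {T : ℕ × ℕ → ℕ //
    (∀ c, c ∉ cs → T c = 0) ∧ (∀ c ∈ cs, 1 ≤ T c) ∧ P T ∧
    (∑ c ∈ cs, Finsupp.single (T c) 1) = d} : ℚ)

/-- complete homogeneous symmetric function `h_r` -/
noncomputable def hFun (r : ℕ) : MvPowerSeries ℕ ℚ :=
  fun d => (Nat.card {f : Fin r → ℕ //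
    (∀ j, 1 ≤ f j) ∧ (∀ j k : Fin r, j ≤ k → f j ≤ f k) ∧
    (∑ j, Finsupp.single (f j) 1) = d} : ℚ)

/-- elementary symmetric function `e_r` -/
noncomputable def eFun (r : ℕ) : MvPowerSeries ℕ ℚ :=
  fun d => (Nat.card {f : Fin r → ℕ //
    (∀ j, 1 ≤ f j) ∧ (∀ j k : Fin r, j < k → f j < f k) ∧
    (∑ j, Finsupp.single (f j) 1) = d} : ℚ)

/-- send a filling to the corresponding basis vector of the free `ℚ`-vector space on
`SIT(α/β)`, or to the zero vector if it is not a standard immaculate tableau -/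
noncomputable def toBasis (α β : List ℕ) (U : ℕ × ℕ → ℕ) :
    ({T : ℕ × ℕ → ℕ // IsSIT α β T} →₀ ℚ) :=
  if h : IsSIT α β U then Finsupp.single ⟨U, h⟩ 1 else 0

/-- the linear extension of `π_i^a` to the free `ℚ`-vector space on `SIT(α/β)` -/
noncomputable def piLin (a : Variant) (α β : List ℕ) (i : ℕ) :
    ({T : ℕ × ℕ → ℕ // IsSIT α β T} →₀ ℚ) →ₗ[ℚ]
      ({T : ℕ × ℕ → ℕ // IsSIT α β T} →₀ ℚ) :=
  Finsupp.lift _ ℚ _ (fun T => toBasis α β (piOp a α β i T.1))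

/-- one step: the tableau `T` is obtained from `S` by applying one operator `π_i^a` -/
def stepRel (a : Variant) (α β : List ℕ) (S T : ℕ × ℕ → ℕ) : Prop :=
  IsSIT α β T ∧ ∃ i, 1 ≤ i ∧ i ≤ skewSize α β - 1 ∧ piOp a α β i S = T

/-- `T` is obtained from `S` by applying a (possibly empty) sequence of operators `π_i^a`,
all intermediate results being tableaux -/
def reach (a : Variant) (α β : List ℕ) : (ℕ × ℕ → ℕ) → (ℕ × ℕ → ℕ) → Prop :=
  Relation.ReflTransGen (stepRel a α β)

/-- the number of skew cells of `α/β` strictly above row `i` other than column-1 cells -/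
noncomputable def aboveCount (α β : List ℕ) (i : ℕ) : ℕ :=
  ∑ i' ∈ Finset.Ico (i + 1) α.length,
    (if i' < β.length then part α i' - part β i' else part α i' - 1)

/-- the tableau `S^0_{α/β}`: the column-1 cells of `α/β` are filled with `1, …, ℓ(α)-ℓ(β)`
bottom to top, then the remaining cells are filled row by row, top to bottom, left to right,
with consecutive integers -/
noncomputable def S0 (α β : List ℕ) : ℕ × ℕ → ℕ :=
  fun c =>
    if InSkew α β c then
      if c.2 = 0 ∧ β.length ≤ c.1 then c.1 - β.length + 1
      else (α.length - β.length) + aboveCount α β c.1 +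
        (if c.1 < β.length then c.2 - part β c.1 + 1 else c.2)
    else 0

/-- the row superstandard tableau `S^{row}_{α/β}`: rows filled left to right with `1, 2, …, N`,
bottom row first -/
noncomputable def Srow (α β : List ℕ) : ℕ × ℕ → ℕ :=
  fun c =>
    if InSkew α β c then
      (∑ i' ∈ Finset.range c.1, (part α i' - part β i')) + (c.2 - part β c.1 + 1)
    else 0

/-- `c` is read before `c'` in the reading word (rows top to bottom, right to left in a row) -/
def readBefore (c c' : ℕ × ℕ) : Prop :=
  c'.1 < c.1 ∨ (c.1 = c'.1 ∧ c'.2 < c.2)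

/-- the number of inversions of the reading word of a tableau of shape `α/β` -/
noncomputable def invNum (α β : List ℕ) (T : ℕ × ℕ → ℕ) : ℕ :=
  ((skewCells α β ×ˢ skewCells α β).filter
    (fun p => readBefore p.1 p.2 ∧ T p.2 < T p.1)).card

/-- `φ_U(T)`: fill the cells of `β` by `U` and those of `α/β` by `T` with all entries of `T`
shifted up by `m = |β|` -/
noncomputable def phiU (α β : List ℕ) (U T : ℕ × ℕ → ℕ) : ℕ × ℕ → ℕ :=
  fun c => if InDiagram β c then U c else if InSkew α β c then T c + β.sum else 0

/-- restriction `T_{≤ m}` of `T` to entries `≤ m` -/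
def restrLe (m : ℕ) (T : ℕ × ℕ → ℕ) : ℕ × ℕ → ℕ :=
  fun c => if T c ≤ m then T c else 0

/-- restriction `T_{> m}` of `T` to entries `> m` -/
def restrGt (m : ℕ) (T : ℕ × ℕ → ℕ) : ℕ × ℕ → ℕ :=
  fun c => if m < T c then T c else 0

/-- standardisation `std(T_{>m})`: keep the entries `> m` and subtract `m` from each -/
def stdGt (m : ℕ) (T : ℕ × ℕ → ℕ) : ℕ × ℕ → ℕ :=
  fun c => if m < T c then T c - m else 0

/-- `T ∈ X_{α,β}`: `T ∈ SIT(α)` and the entries `> |β|` of `T` occupy exactly the cells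
of `α/β` -/
def memX (α β : List ℕ) (T : ℕ × ℕ → ℕ) : Prop :=
  IsSIT α [] T ∧ ∀ c, InDiagram α c → (β.sum < T c ↔ ¬ InDiagram β c)


/-! ### Auxiliary lemmas for the proof -/

section Aux
open Finset

/-! #### arithmetic lemmas -/

lemma choose2_succ (n : ℕ) : (n+1).choose 2 = n.choose 2 + n := by
  have h : (n+1).choose 2 = n.choose 1 + n.choose 2 := Nat.choose_succ_succ n 1
  rw [h, Nat.choose_one_right]; omega

lemma choose2_add (a b : ℕ) : (a+b).choose 2 = a.choose 2 + b.choose 2 + a*b := by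
  induction b with
  | zero => simp
  | succ b ih =>
      have h : a + (b+1) = (a+b) + 1 := by omega
      rw [h, choose2_succ, ih, choose2_succ]; ring

lemma sum_choose2_range (d : ℕ) : ∑ k ∈ range d, (k.choose 2) = d.choose 3 := by
  induction d with
  | zero => simp
  | succ d ih =>
      have h : (d+1).choose 3 = d.choose 2 + d.choose 3 := Nat.choose_succ_succ d 2
      rw [Finset.sum_range_succ, ih, h]; omega

lemma choose2_sum (f : ℕ → ℕ) (n : ℕ) :
    (∑ i ∈ range n, f i).choose 2 =
      ∑ i ∈ range n, (f i).choose 2 + ∑ i ∈ range n, (∑ j ∈ range i, f j) * f i := by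
  induction n with
  | zero => simp
  | succ n ih =>
      rw [Finset.sum_range_succ, choose2_add, ih, Finset.sum_range_succ (fun i => (f i).choose 2),
        Finset.sum_range_succ (fun i => (∑ j ∈ range i, f j) * f i)]
      ring

lemma sum_ind (m : ℕ) : ∀ i : ℕ, ∑ i' ∈ range i, (if m ≤ i' then 1 else 0) = i - min i m := by
  intro i
  induction i with
  | zero => simp
  | succ i ih =>
      rw [Finset.sum_range_succ, ih]
      split <;> omega

/-! #### part lemmas -/

lemma part_eq_zero {l : List ℕ} {i : ℕ} (h : l.length ≤ i) : part l i = 0 := by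
  rw [part, List.getD_eq_default _ _ h]

lemma part_pos {l : List ℕ} (hl : IsComposition l) {i : ℕ} (hi : i < l.length) : 1 ≤ part l i := by
  rw [part, List.getD_eq_getElem l 0 hi]
  exact hl _ (List.getElem_mem hi)

lemma part_le_sum (l : List ℕ) (i : ℕ) : part l i ≤ l.sum := by
  rcases lt_or_ge i l.length with h | h
  · rw [part, List.getD_eq_getElem l 0 h]
    exact List.le_sum_of_mem (List.getElem_mem h)
  · rw [part_eq_zero h]; exact Nat.zero_le _

lemma sum_part (l : List ℕ) {n : ℕ} (h : l.length ≤ n) :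
    ∑ i ∈ range n, part l i = l.sum := by
  induction l generalizing n with
  | nil => simp [part]
  | cons a t ih =>
      cases n with
      | zero => simp at h
      | succ n =>
          rw [Finset.sum_range_succ']
          have h1 : ∀ i, part (a :: t) (i+1) = part t i := fun i => rfl
          have h2 : part (a :: t) 0 = a := rfl
          simp only [h1, h2, List.sum_cons]
          rw [ih (by simpa using h)]; omega

/-! #### skew diagram basics -/

lemma inSkew_iff {α β : List ℕ} {c : ℕ × ℕ} :
    InSkew α β c ↔ c.1 < α.length ∧ part β c.1 ≤ c.2 ∧ c.2 < part α c.1 := by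
  unfold InSkew InDiagram
  rcases lt_or_ge c.1 β.length with h | h
  · constructor
    · rintro ⟨⟨h1, h2⟩, h3⟩
      exact ⟨h1, by omega, h2⟩
    · rintro ⟨h1, h2, h3⟩
      exact ⟨⟨h1, h3⟩, by omega⟩
  · rw [part_eq_zero h]
    constructor
    · rintro ⟨⟨h1, h2⟩, -⟩; exact ⟨h1, Nat.zero_le _, h2⟩
    · rintro ⟨h1, -, h2⟩; exact ⟨⟨h1, h2⟩, by omega⟩

lemma mem_skewCells {α β : List ℕ} {c : ℕ × ℕ} :
    c ∈ skewCells α β ↔ InSkew α β c := by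
  rw [skewCells, Finset.mem_filter, Finset.mem_product, Finset.mem_range, Finset.mem_range]
  constructor
  · exact fun h => h.2
  · intro h
    refine ⟨⟨h.1.1, ?_⟩, h⟩
    have := h.1.2
    have := part_le_sum α c.1
    omega

lemma skewCells_eq (α β : List ℕ) :
    skewCells α β = (range α.length).biUnion
      (fun i => ({i} : Finset ℕ) ×ˢ Finset.Ico (part β i) (part α i)) := by
  ext c
  rw [mem_skewCells, inSkew_iff, Finset.mem_biUnion]
  constructor
  · rintro ⟨h1, h2, h3⟩
    exact ⟨c.1, Finset.mem_range.2 h1, by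
      rw [Finset.mem_product, Finset.mem_singleton, Finset.mem_Ico]; exact ⟨rfl, h2, h3⟩⟩
  · rintro ⟨i, hi, hc⟩
    rw [Finset.mem_product, Finset.mem_singleton, Finset.mem_Ico] at hc
    obtain ⟨rfl, h2, h3⟩ := hc
    exact ⟨Finset.mem_range.1 hi, h2, h3⟩

lemma card_skewCells_rows (α β : List ℕ) :
    (skewCells α β).card = ∑ i ∈ range α.length, (part α i - part β i) := by
  rw [skewCells_eq, Finset.card_biUnion]
  · refine Finset.sum_congr rfl fun i _ => ?_
    rw [Finset.card_product, Finset.card_singleton, Nat.card_Ico, one_mul]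
  · intro x _ y _ hxy
    simp only [Finset.disjoint_left]
    rintro c hc hc'
    rw [Finset.mem_product, Finset.mem_singleton] at hc hc'
    exact hxy (hc.1 ▸ hc'.1)

lemma sum_over_cells (α β : List ℕ) (G : ℕ → ℕ) :
    ∑ x ∈ skewCells α β, G x.1 =
      ∑ i ∈ range α.length, (part α i - part β i) * G i := by
  rw [skewCells_eq, Finset.sum_biUnion]
  · refine Finset.sum_congr rfl fun i _ => ?_
    rw [Finset.sum_product]
    simp [mul_comm]
  · intro x _ y _ hxy
    simp only [Function.onFun, Finset.disjoint_left]
    rintro c hc hc'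
    rw [Finset.mem_product, Finset.mem_singleton] at hc hc'
    exact hxy (hc.1 ▸ hc'.1)

lemma card_skewCells {α β : List ℕ} (hsub : SubComp β α) :
    (skewCells α β).card + β.sum = α.sum := by
  rw [card_skewCells_rows]
  have hβ : ∀ i < α.length, part β i ≤ part α i := by
    intro i hi
    rcases lt_or_ge i β.length with h | h
    · exact hsub.2 i h
    · rw [part_eq_zero h]; exact Nat.zero_le _
  have h : ∑ i ∈ range α.length, (part α i - part β i) + ∑ i ∈ range α.length, part β i
      = ∑ i ∈ range α.length, part α i := by
    rw [← Finset.sum_add_distrib]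
    exact Finset.sum_congr rfl fun i hi => by
      have := hβ i (Finset.mem_range.1 hi); omega
  rw [sum_part β hsub.1, sum_part α le_rfl] at h
  exact h

/-! #### reading-order pair counting -/

lemma readBefore_irrefl (c : ℕ × ℕ) : ¬ readBefore c c := by unfold readBefore; omega

lemma readBefore_asymm {c c' : ℕ × ℕ} (h : readBefore c c') : ¬ readBefore c' c := by
  unfold readBefore at *; omega

lemma readBefore_total {c c' : ℕ × ℕ} (h : c ≠ c') : readBefore c c' ∨ readBefore c' c := by
  rw [ne_eq, Prod.ext_iff, not_and_or] at h
  unfold readBefore; omega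

lemma card_readBefore (s : Finset (ℕ × ℕ)) :
    ((s ×ˢ s).filter fun p => readBefore p.1 p.2).card = s.card.choose 2 := by
  set u := (s ×ˢ s).filter fun p => readBefore p.1 p.2 with hu
  set v := (s ×ˢ s).filter fun p => readBefore p.2 p.1 with hv
  have hcard : u.card = v.card := by
    refine Finset.card_bij (fun p _ => p.swap) ?_ ?_ ?_
    · intro p hp
      rw [hu, Finset.mem_filter, Finset.mem_product] at hp
      rw [hv, Finset.mem_filter, Finset.mem_product]
      exact ⟨⟨hp.1.2, hp.1.1⟩, hp.2⟩
    · intro p _ q _ hpq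
      exact Prod.swap_injective hpq
    · intro p hp
      rw [hv, Finset.mem_filter, Finset.mem_product] at hp
      exact ⟨p.swap, by
        rw [hu, Finset.mem_filter, Finset.mem_product]
        exact ⟨⟨hp.1.2, hp.1.1⟩, hp.2⟩, Prod.swap_swap p⟩
  have hdisj : Disjoint u v := by
    rw [Finset.disjoint_left]
    intro p hp hp'
    rw [hu, Finset.mem_filter] at hp
    rw [hv, Finset.mem_filter] at hp'
    exact readBefore_asymm hp.2 hp'.2
  have hunion : u ∪ v = s.offDiag := by
    ext p
    rw [Finset.mem_union, hu, hv, Finset.mem_filter, Finset.mem_filter, Finset.mem_product,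
      Finset.mem_offDiag, ← and_or_left]
    constructor
    · rintro ⟨⟨h1, h2⟩, h3⟩
      refine ⟨h1, h2, ?_⟩
      intro h
      rcases h3 with h3 | h3 <;> · rw [h] at h3; exact readBefore_irrefl _ h3
    · rintro ⟨h1, h2, h3⟩
      exact ⟨⟨h1, h2⟩, readBefore_total h3⟩
  have h2 : u.card + v.card = s.card * s.card - s.card := by
    rw [← Finset.card_union_of_disjoint hdisj, hunion, Finset.offDiag_card]
  have h4 : s.card.choose 2 = s.card * (s.card - 1) / 2 := Nat.choose_two_right _
  have h5 : s.card * (s.card - 1) = s.card * s.card - s.card := by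
    cases' Nat.eq_zero_or_pos s.card with h h
    · simp [h]
    · have h6 : s.card - 1 + 1 = s.card := by omega
      calc s.card * (s.card - 1) = s.card * (s.card - 1 + 1) - s.card := by ring_nf; omega
        _ = s.card * s.card - s.card := by rw [h6]
  rw [← h5] at h2
  omega

lemma split_inv (s : Finset (ℕ × ℕ)) (T : ℕ × ℕ → ℕ)
    (hinj : ∀ p ∈ s, ∀ q ∈ s, T p = T q → p = q) :
    ((s ×ˢ s).filter fun p => readBefore p.1 p.2 ∧ T p.2 < T p.1).card
      + ((s ×ˢ s).filter fun p => readBefore p.1 p.2 ∧ T p.1 < T p.2).card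
      = s.card.choose 2 := by
  rw [← card_readBefore s]
  rw [← Finset.card_union_of_disjoint]
  · congr 1
    ext p
    rw [Finset.mem_union, Finset.mem_filter, Finset.mem_filter, Finset.mem_filter,
      Finset.mem_product]
    constructor
    · rintro (⟨h1, h2, h3⟩ | ⟨h1, h2, h3⟩) <;> exact ⟨h1, h2⟩
    · rintro ⟨h1, h2⟩
      have h1' := h1
      have hne : p.1 ≠ p.2 := by
        rintro h
        rw [h] at h2
        exact readBefore_irrefl _ h2
      have : T p.1 ≠ T p.2 := fun h => hne (hinj _ h1'.1 _ h1'.2 h)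
      rcases Nat.lt_or_ge (T p.1) (T p.2) with h | h
      · exact Or.inr ⟨h1, h2, h⟩
      · exact Or.inl ⟨h1, h2, by omega⟩
  · rw [Finset.disjoint_left]
    rintro p hp hp'
    rw [Finset.mem_filter] at hp hp'
    omega

/-! #### Srow lemmas -/

lemma Srow_lt {α β : List ℕ} {p q : ℕ × ℕ} (hp : InSkew α β p) (hq : InSkew α β q)
    (hr : readBefore p q) : Srow α β q < Srow α β p := by
  have hp' := inSkew_iff.1 hp
  have hq' := inSkew_iff.1 hq
  simp only [Srow, if_pos hp, if_pos hq]
  rcases hr with h | ⟨h1, h2⟩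
  · have e1 : ∑ i' ∈ range q.1, (part α i' - part β i') + (part α q.1 - part β q.1)
        = ∑ i' ∈ range (q.1+1), (part α i' - part β i') := (Finset.sum_range_succ _ _).symm
    have e2 : ∑ i' ∈ range (q.1+1), (part α i' - part β i')
        ≤ ∑ i' ∈ range p.1, (part α i' - part β i') :=
      Finset.sum_le_sum_of_subset (Finset.range_subset_range.2 (by omega))
    omega
  · rw [h1] at hp' ⊢
    omega

/-! #### S0 lemmas -/

/-- the summand of `aboveCount`: the number of non-special skew cells in row `i` -/
noncomputable def nsRow (α β : List ℕ) (i : ℕ) : ℕ :=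
  if i < β.length then part α i - part β i else part α i - 1

/-- a special cell: a column-0 cell in a row of index `≥ β.length` -/
def IsSpec (β : List ℕ) (c : ℕ × ℕ) : Prop := c.2 = 0 ∧ β.length ≤ c.1

lemma aboveCount_eq {α β : List ℕ} (i : ℕ) :
    aboveCount α β i = ∑ i' ∈ Finset.Ico (i+1) α.length, nsRow α β i' := rfl

lemma S0_spec {α β : List ℕ} {c : ℕ × ℕ} (hc : InSkew α β c) (h : IsSpec β c) :
    S0 α β c = c.1 - β.length + 1 := by
  rw [S0, if_pos hc, if_pos (show c.2 = 0 ∧ β.length ≤ c.1 from h)]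

lemma S0_nonspec {α β : List ℕ} {c : ℕ × ℕ} (hc : InSkew α β c) (h : ¬ IsSpec β c) :
    S0 α β c = (α.length - β.length) + aboveCount α β c.1 +
      (if c.1 < β.length then c.2 - part β c.1 + 1 else c.2) := by
  rw [S0, if_pos hc, if_neg (show ¬(c.2 = 0 ∧ β.length ≤ c.1) from h)]

lemma off_lb {α β : List ℕ} {c : ℕ × ℕ} (hc : InSkew α β c) (h : ¬ IsSpec β c) :
    1 ≤ (if c.1 < β.length then c.2 - part β c.1 + 1 else c.2) := by
  rw [inSkew_iff] at hc
  rw [IsSpec, not_and_or] at h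
  split <;> omega

lemma off_ub {α β : List ℕ} {c : ℕ × ℕ} (hc : InSkew α β c) (h : ¬ IsSpec β c) :
    (if c.1 < β.length then c.2 - part β c.1 + 1 else c.2) ≤ nsRow α β c.1 := by
  rw [inSkew_iff] at hc
  rw [IsSpec, not_and_or] at h
  rw [nsRow]
  split <;> omega

lemma aboveCount_lt {α β : List ℕ} {i i' : ℕ} (h : i' < i) (hi : i < α.length) :
    aboveCount α β i + nsRow α β i ≤ aboveCount α β i' := by
  rw [aboveCount_eq, aboveCount_eq]
  rw [← Finset.sum_Ico_consecutive (nsRow α β) (by omega : i' + 1 ≤ i + 1)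
    (by omega : i + 1 ≤ α.length)]
  have h2 : nsRow α β i ≤ ∑ i'' ∈ Finset.Ico (i'+1) (i+1), nsRow α β i'' :=
    Finset.single_le_sum (fun _ _ => Nat.zero_le _) (by rw [Finset.mem_Ico]; omega)
  omega

lemma S0_spec_le {α β : List ℕ} {c : ℕ × ℕ} (hc : InSkew α β c) (h : IsSpec β c) :
    S0 α β c ≤ α.length - β.length := by
  rw [S0_spec hc h]
  have := (inSkew_iff.1 hc).1
  have := h.2
  omega

lemma S0_nonspec_ge {α β : List ℕ} {c : ℕ × ℕ} (hc : InSkew α β c) (h : ¬ IsSpec β c) :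
    (α.length - β.length) + 1 ≤ S0 α β c := by
  rw [S0_nonspec hc h]
  have := off_lb hc h
  omega

lemma S0_lt_A {α β : List ℕ} {p q : ℕ × ℕ} (hp : InSkew α β p) (hq : InSkew α β q)
    (h : q.1 < p.1) (hns : ¬ IsSpec β q) : S0 α β p < S0 α β q := by
  by_cases hsp : IsSpec β p
  · have h1 := S0_spec_le hp hsp
    have h2 := S0_nonspec_ge hq hns
    omega
  · rw [S0_nonspec hp hsp, S0_nonspec hq hns]
    have h1 := off_ub hp hsp
    have h2 := off_lb hq hns
    have h3 := aboveCount_lt (β := β) h (inSkew_iff.1 hp).1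
    omega

lemma S0_lt_B {α β : List ℕ} {p q : ℕ × ℕ} (hp : InSkew α β p) (hq : InSkew α β q)
    (h : readBefore p q) (hcase : IsSpec β q ∨ p.1 = q.1) :
    S0 α β q < S0 α β p := by
  rcases hcase with hs | hrow
  · rcases h with h | h
    · by_cases hsp : IsSpec β p
      · rw [S0_spec hp hsp, S0_spec hq hs]
        have := hs.2
        omega
      · have h1 := S0_spec_le hq hs
        have h2 := S0_nonspec_ge hp hsp
        omega
    · have hsp : ¬ IsSpec β p := by
        rw [IsSpec]
        have := hs.1
        omega
      have h1 := S0_spec_le hq hs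
      have h2 := S0_nonspec_ge hp hsp
      omega
  · have hj : q.2 < p.2 := by
      rcases h with h | h
      · omega
      · exact h.2
    by_cases hs : IsSpec β q
    · have hsp : ¬ IsSpec β p := by
        rw [IsSpec]
        have := hs.1
        omega
      have h1 := S0_spec_le hq hs
      have h2 := S0_nonspec_ge hp hsp
      omega
    · have hsp : ¬ IsSpec β p := by
        rw [IsSpec] at hs ⊢
        omega
      rw [S0_nonspec hp hsp, S0_nonspec hq hs]
      rw [hrow]
      have hq' := inSkew_iff.1 hq
      have hp' := inSkew_iff.1 hp
      rw [hrow] at hp'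
      split <;> omega

lemma S0_inj {α β : List ℕ} {p q : ℕ × ℕ} (hp : InSkew α β p) (hq : InSkew α β q)
    (h : S0 α β p = S0 α β q) : p = q := by
  by_contra hne
  rcases readBefore_total hne with hr | hr
  · by_cases hc : q.1 < p.1 ∧ ¬ IsSpec β q
    · have := S0_lt_A hp hq hc.1 hc.2; omega
    · have hcase : IsSpec β q ∨ p.1 = q.1 := by
        rcases hr with h' | h'
        · by_cases hs : IsSpec β q
          · exact Or.inl hs
          · exact absurd ⟨h', hs⟩ hc
        · exact Or.inr h'.1
      have := S0_lt_B hp hq hr hcase; omega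
  · by_cases hc : p.1 < q.1 ∧ ¬ IsSpec β p
    · have := S0_lt_A hq hp hc.1 hc.2; omega
    · have hcase : IsSpec β p ∨ q.1 = p.1 := by
        rcases hr with h' | h'
        · by_cases hs : IsSpec β p
          · exact Or.inl hs
          · exact absurd ⟨h', hs⟩ hc
        · exact Or.inr h'.1
      have := S0_lt_B hq hp hr hcase; omega

lemma S0_anti_iff {α β : List ℕ} {p q : ℕ × ℕ} (hp : InSkew α β p) (hq : InSkew α β q)
    (hr : readBefore p q) :
    (S0 α β p < S0 α β q) ↔ (q.1 < p.1 ∧ ¬ IsSpec β q) := by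
  constructor
  · intro hlt
    by_contra hc
    have hcase : IsSpec β q ∨ p.1 = q.1 := by
      rcases hr with h' | h'
      · by_cases hs : IsSpec β q
        · exact Or.inl hs
        · exact absurd ⟨h', hs⟩ hc
      · exact Or.inr h'.1
    have := S0_lt_B hp hq hr hcase
    omega
  · rintro ⟨h1, h2⟩
    exact S0_lt_A hp hq h1 h2

lemma card_nonspec_below {α β : List ℕ} {i : ℕ} (hi : i ≤ α.length) :
    ((skewCells α β).filter fun q => q.1 < i ∧ ¬ IsSpec β q).card
      = ∑ i' ∈ range i, nsRow α β i' := by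
  have hset : (skewCells α β).filter (fun q => q.1 < i ∧ ¬ IsSpec β q)
      = (range i).biUnion (fun i' => ({i'} : Finset ℕ) ×ˢ
          Finset.Ico (if i' < β.length then part β i' else 1) (part α i')) := by
    ext c
    rw [Finset.mem_filter, mem_skewCells, inSkew_iff, Finset.mem_biUnion]
    constructor
    · rintro ⟨⟨h1, h2, h3⟩, h4, h5⟩
      refine ⟨c.1, Finset.mem_range.2 h4, ?_⟩
      rw [Finset.mem_product, Finset.mem_singleton, Finset.mem_Ico]
      refine ⟨rfl, ?_, h3⟩
      rw [IsSpec, not_and_or] at h5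
      split <;> omega
    · rintro ⟨i', hi', hc⟩
      rw [Finset.mem_product, Finset.mem_singleton, Finset.mem_Ico] at hc
      obtain ⟨rfl, h2, h3⟩ := hc
      rw [Finset.mem_range] at hi'
      have hcL : c.1 < α.length := by omega
      refine ⟨⟨hcL, ?_, h3⟩, hi', ?_⟩
      · by_cases h : c.1 < β.length
        · rw [if_pos h] at h2; exact h2
        · rw [part_eq_zero (show β.length ≤ c.1 by omega)]
          exact Nat.zero_le _
      · rw [IsSpec, not_and_or]
        by_cases h : c.1 < β.length
        · right; omega
        · rw [if_neg h] at h2; left; omega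
  rw [hset, Finset.card_biUnion]
  · refine Finset.sum_congr rfl fun i' _ => ?_
    rw [Finset.card_product, Finset.card_singleton, Nat.card_Ico, one_mul, nsRow]
    split <;> rfl
  · intro x _ y _ hxy
    simp only [Finset.disjoint_left]
    rintro c hc hc'
    rw [Finset.mem_product, Finset.mem_singleton] at hc hc'
    exact hxy (hc.1 ▸ hc'.1)

lemma anti_card (α β : List ℕ) :
    ((skewCells α β ×ˢ skewCells α β).filter
        fun p => readBefore p.1 p.2 ∧ S0 α β p.1 < S0 α β p.2).card
      = ∑ i ∈ range α.length,
          (part α i - part β i) * (∑ i' ∈ range i, nsRow α β i') := by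
  have hchar : ((skewCells α β ×ˢ skewCells α β).filter
        fun p => readBefore p.1 p.2 ∧ S0 α β p.1 < S0 α β p.2)
      = ((skewCells α β ×ˢ skewCells α β).filter
        fun p => p.2.1 < p.1.1 ∧ ¬ IsSpec β p.2) := by
    ext p
    rw [Finset.mem_filter, Finset.mem_filter]
    constructor
    · rintro ⟨h1, hr, hlt⟩
      have h1' := Finset.mem_product.1 h1
      exact ⟨h1, (S0_anti_iff (mem_skewCells.1 h1'.1) (mem_skewCells.1 h1'.2) hr).1 hlt⟩
    · rintro ⟨h1, hcond⟩
      have h1' := Finset.mem_product.1 h1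
      exact ⟨h1, Or.inl hcond.1,
        S0_lt_A (mem_skewCells.1 h1'.1) (mem_skewCells.1 h1'.2) hcond.1 hcond.2⟩
  rw [hchar]
  have hfib := Finset.card_eq_sum_card_fiberwise
    (f := fun p : (ℕ × ℕ) × (ℕ × ℕ) => p.1)
    (s := (skewCells α β ×ˢ skewCells α β).filter fun p => p.2.1 < p.1.1 ∧ ¬ IsSpec β p.2)
    (t := skewCells α β)
    (fun p hp => by
      rw [Finset.mem_coe, Finset.mem_filter, Finset.mem_product] at hp
      exact hp.1.1)
  rw [hfib]
  have hstep : ∀ x ∈ skewCells α β,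
      (((skewCells α β ×ˢ skewCells α β).filter
          fun p => p.2.1 < p.1.1 ∧ ¬ IsSpec β p.2).filter fun p => p.1 = x).card
        = ((skewCells α β).filter fun q => q.1 < x.1 ∧ ¬ IsSpec β q).card := by
    intro x hx
    refine Finset.card_bij (fun p _ => p.2) ?_ ?_ ?_
    · intro p hp
      rw [Finset.mem_filter, Finset.mem_filter, Finset.mem_product] at hp
      obtain ⟨⟨⟨hp1, hp2⟩, hc1, hc2⟩, hpx⟩ := hp
      rw [Finset.mem_filter]
      rw [hpx] at hc1
      exact ⟨hp2, hc1, hc2⟩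
    · intro p hp q hq hpq
      rw [Finset.mem_filter] at hp hq
      have hfst : p.1 = q.1 := by rw [hp.2, hq.2]
      exact Prod.ext hfst hpq
    · intro q hq
      rw [Finset.mem_filter] at hq
      refine ⟨(x, q), ?_, rfl⟩
      rw [Finset.mem_filter, Finset.mem_filter, Finset.mem_product]
      exact ⟨⟨⟨hx, hq.1⟩, hq.2.1, hq.2.2⟩, rfl⟩
  rw [Finset.sum_congr rfl hstep]
  rw [sum_over_cells α β (fun i => ((skewCells α β).filter fun q => q.1 < i ∧ ¬ IsSpec β q).card)]
  refine Finset.sum_congr rfl fun i hi => ?_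
  rw [card_nonspec_below (le_of_lt (Finset.mem_range.1 hi))]

/-! #### the main numerical identity -/

lemma partial_f_eq {α β : List ℕ} (hα : IsComposition α) {i : ℕ} (hi : i ≤ α.length) :
    ∑ j ∈ range i, (part α j - part β j)
      = (∑ j ∈ range i, nsRow α β j) + (i - min i β.length) := by
  have h : ∀ j ∈ range i, (part α j - part β j)
      = nsRow α β j + (if β.length ≤ j then 1 else 0) := by
    intro j hj
    rw [Finset.mem_range] at hj
    have hjL : j < α.length := by omega
    have hpos := part_pos hα hjL
    rw [nsRow]
    by_cases h' : j < β.length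
    · rw [if_pos h', if_neg (by omega)]; omega
    · rw [if_neg h', if_pos (by omega), part_eq_zero (show β.length ≤ j by omega)]
      omega
  rw [Finset.sum_congr rfl h, Finset.sum_add_distrib, sum_ind]

lemma star_identity {α β : List ℕ} (hα : IsComposition α) (hm : β.length ≤ α.length) :
    (∑ i ∈ range α.length, (part α i - part β i)).choose 2 + (α.length - β.length).choose 3
      = (∑ i ∈ range β.length, (part α i - part β i).choose 2)
        + (∑ i ∈ Finset.Ico β.length α.length, (part α i + i - β.length).choose 2)
        + ∑ i ∈ range α.length, (part α i - part β i) * (∑ i' ∈ range i, nsRow α β i') := by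
  have h1 := choose2_sum (fun i => part α i - part β i) α.length
  have h3 : ∑ i ∈ range α.length, (∑ j ∈ range i, (part α j - part β j)) * (part α i - part β i)
      = ∑ i ∈ range α.length, (part α i - part β i) * (∑ i' ∈ range i, nsRow α β i')
        + ∑ i ∈ range α.length, (i - min i β.length) * (part α i - part β i) := by
    rw [← Finset.sum_add_distrib]
    refine Finset.sum_congr rfl fun i hi => ?_
    rw [partial_f_eq hα (le_of_lt (Finset.mem_range.1 hi)), add_mul, mul_comm]
  have h4 : ∑ i ∈ range α.length, (i - min i β.length) * (part α i - part β i)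
      = ∑ i ∈ Finset.Ico β.length α.length, (i - β.length) * (part α i - part β i) := by
    rw [Finset.range_eq_Ico, ← Finset.sum_Ico_consecutive _ (Nat.zero_le β.length) hm]
    have hz : ∑ i ∈ Finset.Ico 0 β.length, (i - min i β.length) * (part α i - part β i) = 0 :=
      Finset.sum_eq_zero (fun i hi => by
        rw [Finset.mem_Ico] at hi
        have hzz : i - min i β.length = 0 := by omega
        rw [hzz, zero_mul])
    rw [hz, zero_add]
    exact Finset.sum_congr rfl fun i hi => by
      rw [Finset.mem_Ico] at hi
      congr 1
      omega
  have h5 : ∑ i ∈ Finset.Ico β.length α.length, (part α i + i - β.length).choose 2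
      = ∑ i ∈ Finset.Ico β.length α.length, (part α i - part β i).choose 2
        + ∑ i ∈ Finset.Ico β.length α.length, ((i - β.length).choose 2)
        + ∑ i ∈ Finset.Ico β.length α.length, (part α i - part β i) * (i - β.length) := by
    rw [← Finset.sum_add_distrib, ← Finset.sum_add_distrib]
    refine Finset.sum_congr rfl fun i hi => ?_
    rw [Finset.mem_Ico] at hi
    have hf : part β i = 0 := part_eq_zero hi.1
    have heq : part α i + i - β.length = (part α i - part β i) + (i - β.length) := by
      rw [hf]; omega
    rw [heq, choose2_add]
  have h6 : ∑ i ∈ Finset.Ico β.length α.length, ((i - β.length).choose 2)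
      = (α.length - β.length).choose 3 := by
    rw [Finset.sum_Ico_eq_sum_range]
    rw [Finset.sum_congr rfl (fun k _ => by
      rw [show β.length + k - β.length = k by omega])]
    exact sum_choose2_range _
  have h7 : ∑ i ∈ range α.length, (part α i - part β i).choose 2
      = ∑ i ∈ range β.length, (part α i - part β i).choose 2
        + ∑ i ∈ Finset.Ico β.length α.length, (part α i - part β i).choose 2 := by
    rw [Finset.range_eq_Ico, ← Finset.sum_Ico_consecutive _ (Nat.zero_le β.length) hm,
      ← Finset.range_eq_Ico]
  have h8 : ∑ i ∈ Finset.Ico β.length α.length, (i - β.length) * (part α i - part β i)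
      = ∑ i ∈ Finset.Ico β.length α.length, (part α i - part β i) * (i - β.length) :=
    Finset.sum_congr rfl fun i _ => mul_comm _ _
  omega

/-! #### the Hecke-operator step lemma -/

lemma swapEntries_lt_iff (S : ℕ × ℕ → ℕ) (i : ℕ) (x y : ℕ × ℕ)
    (e1 : ¬(S x = i ∧ S y = i+1)) (e2 : ¬(S x = i+1 ∧ S y = i)) :
    (swapEntries i S y < swapEntries i S x ↔ S y < S x) := by
  simp only [swapEntries]
  split_ifs <;> omega

lemma step_inv {α β : List ℕ} (hN : 1 ≤ skewSize α β) (S T : ℕ × ℕ → ℕ)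
    (hS : IsSIT α β S) (hT : IsSIT α β T) (hTS : T ≠ S) (i : ℕ)
    (hpi : piOp .rdI α β i S = T) :
    invNum α β T = invNum α β S + 1 := by
  rw [piOp] at hpi
  by_cases hdes : i ∈ Des .rdI α β S
  · rw [if_pos hdes] at hpi
    by_cases hsit : IsSIT α β (swapEntries i S)
    · rw [if_pos hsit] at hpi
      subst hpi
      rw [Des, Finset.mem_filter] at hdes
      obtain ⟨hiN, c, c', hc, hc', hSc, hSc', hrr⟩ := hdes
      have hrow : c'.1 ≤ c.1 := hrr
      have hinj := hS.1.inj
      have hlt : c'.1 < c.1 := by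
        rcases Nat.lt_or_ge c'.1 c.1 with h | h
        · exact h
        · exfalso
          have heq : c'.1 = c.1 := by omega
          have hne : c ≠ c' := by
            intro h'
            rw [h'] at hSc
            omega
          have hcol : c.2 ≠ c'.2 := by
            intro h'
            exact hne (Prod.ext (by omega) h')
          rcases Nat.lt_or_ge c.2 c'.2 with h2 | h2
          · have hrows := hT.2.1
            have hc2 : InSkew α β (c.1, c.2) := by
              rw [show ((c.1 : ℕ), (c.2 : ℕ)) = c from rfl]
              exact hc
            have hc2' : InSkew α β (c.1, c'.2) := by
              rw [show ((c.1 : ℕ), (c'.2 : ℕ)) = c' from by rw [← heq]]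
              exact hc'
            have hmain := hrows c.1 c.2 c'.2 h2 hc2 hc2'
            have hv1 : swapEntries i S (c.1, c.2) = i + 1 := by
              rw [show ((c.1 : ℕ), (c.2 : ℕ)) = c from rfl, swapEntries, if_pos hSc]
            have hv2 : swapEntries i S (c.1, c'.2) = i := by
              rw [show ((c.1 : ℕ), (c'.2 : ℕ)) = c' from by rw [← heq]]
              rw [swapEntries, if_neg (by omega), if_pos hSc']
            omega
          · have h2' : c'.2 < c.2 := by omega
            have hrows := hS.2.1
            have hc2' : InSkew α β (c.1, c'.2) := by
              rw [show ((c.1 : ℕ), (c'.2 : ℕ)) = c' from by rw [← heq]]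
              exact hc'
            have hc2 : InSkew α β (c.1, c.2) := by
              rw [show ((c.1 : ℕ), (c.2 : ℕ)) = c from rfl]
              exact hc
            have hmain := hrows c.1 c'.2 c.2 h2' hc2' hc2
            have hv1 : S (c.1, c'.2) = i + 1 := by
              rw [show ((c.1 : ℕ), (c'.2 : ℕ)) = c' from by rw [← heq]]; exact hSc'
            have hv2 : S (c.1, c.2) = i := by
              rw [show ((c.1 : ℕ), (c.2 : ℕ)) = c from rfl]; exact hSc
            omega
      have hkey : ((skewCells α β ×ˢ skewCells α β).filter
            (fun p => readBefore p.1 p.2 ∧ swapEntries i S p.2 < swapEntries i S p.1))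
          = insert (c, c') ((skewCells α β ×ˢ skewCells α β).filter
            (fun p => readBefore p.1 p.2 ∧ S p.2 < S p.1)) := by
        ext p
        rw [Finset.mem_insert, Finset.mem_filter, Finset.mem_filter]
        constructor
        · rintro ⟨hmem, hr, hltv⟩
          have hmem' := Finset.mem_product.1 hmem
          by_cases hp1 : p.1 = c ∧ p.2 = c'
          · left
            exact Prod.ext hp1.1 hp1.2
          · right
            refine ⟨hmem, hr, ?_⟩
            have hp2 : ¬(p.1 = c' ∧ p.2 = c) := by
              rintro ⟨ha, hb⟩
              rw [ha, hb] at hr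
              rcases hr with h | h
              · omega
              · omega
            have e1 : ¬(S p.1 = i ∧ S p.2 = i+1) := by
              rintro ⟨ha, hb⟩
              exact hp1 ⟨hinj _ _ (mem_skewCells.1 hmem'.1) hc (by omega),
                hinj _ _ (mem_skewCells.1 hmem'.2) hc' (by omega)⟩
            have e2 : ¬(S p.1 = i+1 ∧ S p.2 = i) := by
              rintro ⟨ha, hb⟩
              exact hp2 ⟨hinj _ _ (mem_skewCells.1 hmem'.1) hc' (by omega),
                hinj _ _ (mem_skewCells.1 hmem'.2) hc (by omega)⟩
            exact (swapEntries_lt_iff S i p.1 p.2 e1 e2).1 hltv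
        · rintro (heq | ⟨hmem, hr, hltv⟩)
          · rw [heq]
            refine ⟨Finset.mem_product.2 ⟨mem_skewCells.2 hc, mem_skewCells.2 hc'⟩,
              Or.inl hlt, ?_⟩
            have hv1 : swapEntries i S c = i + 1 := by
              rw [swapEntries, if_pos hSc]
            have hv2 : swapEntries i S c' = i := by
              rw [swapEntries, if_neg (by omega), if_pos hSc']
            simp only
            omega
          · have hmem' := Finset.mem_product.1 hmem
            refine ⟨hmem, hr, ?_⟩
            have e1 : ¬(S p.1 = i ∧ S p.2 = i+1) := by
              rintro ⟨ha, hb⟩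
              omega
            have e2 : ¬(S p.1 = i+1 ∧ S p.2 = i) := by
              rintro ⟨ha, hb⟩
              have hq1 : p.1 = c' := hinj _ _ (mem_skewCells.1 hmem'.1) hc' (by omega)
              have hq2 : p.2 = c := hinj _ _ (mem_skewCells.1 hmem'.2) hc (by omega)
              rw [hq1, hq2] at hr
              rcases hr with h | h
              · omega
              · omega
            exact (swapEntries_lt_iff S i p.1 p.2 e1 e2).2 hltv
      have hnotmem : (c, c') ∉ ((skewCells α β ×ˢ skewCells α β).filter
            (fun p => readBefore p.1 p.2 ∧ S p.2 < S p.1)) := by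
        rw [Finset.mem_filter]
        rintro ⟨-, -, hltv⟩
        simp only at hltv
        omega
      rw [invNum, invNum, hkey, Finset.card_insert_of_notMem hnotmem]
    · rw [if_neg hsit] at hpi
      exfalso
      have h1 : (1 : ℕ) ∈ Finset.Icc 1 (skewSize α β) := by
        rw [Finset.mem_Icc]; omega
      obtain ⟨c, hcc, hTc⟩ := hT.1.surj 1 h1
      rw [← hpi] at hTc
      simp at hTc
  · rw [if_neg hdes] at hpi
    exact absurd hpi.symm hTS

end Aux

/-- the skew immaculate Hecke poset is graded by the number of inversions of
the reading word: each nontrivial application of an operator `π_i^{rdI}` raises `inv` by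
exactly `1`; moreover `inv(S^{row}_{α/β}) = C(N,2)`,
`inv(S^0_{α/β}) = Σ_{i≤ℓ(β)} C(α_i-β_i,2) + Σ_{i>ℓ(β)} C(α_i+i-ℓ(β)-1,2) - C(ℓ(α)-ℓ(β),3)`,
and hence the total rank is
`C(N,2) - Σ C(α_i-β_i,2) - Σ C(α_i+i-ℓ(β)-1,2) + C(ℓ(α)-ℓ(β),3)`. -/
theorem skew_poset_graded_rank (α β : List ℕ)
    (hα : IsComposition α) (hβ : IsComposition β) (hsub : SubComp β α)
    (hN : 1 ≤ skewSize α β) :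
    (∀ S T, IsSIT α β S → IsSIT α β T → T ≠ S →
      (∃ i, 1 ≤ i ∧ i ≤ skewSize α β - 1 ∧ piOp .rdI α β i S = T) →
      invNum α β T = invNum α β S + 1) ∧
    invNum α β (Srow α β) = (skewSize α β).choose 2 ∧
    invNum α β (S0 α β) + (α.length - β.length).choose 3 =
      (∑ i ∈ Finset.range β.length, (part α i - part β i).choose 2) +
        (∑ i ∈ Finset.Ico β.length α.length, (part α i + i - β.length).choose 2) ∧
    invNum α β (Srow α β) +
        ((∑ i ∈ Finset.range β.length, (part α i - part β i).choose 2) +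
          (∑ i ∈ Finset.Ico β.length α.length, (part α i + i - β.length).choose 2)) =
      invNum α β (S0 α β) + (skewSize α β).choose 2 + (α.length - β.length).choose 3 := by
  have hm : β.length ≤ α.length := hsub.1
  have hcard : (skewCells α β).card + β.sum = α.sum := card_skewCells hsub
  have hNc : (skewCells α β).card = skewSize α β := by rw [skewSize]; omega
  -- part 2 : the row superstandard tableau
  have hSrow : invNum α β (Srow α β) = (skewSize α β).choose 2 := by
    rw [invNum, ← hNc, ← card_readBefore (skewCells α β)]
    congr 1
    ext p
    rw [Finset.mem_filter, Finset.mem_filter, Finset.mem_product]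
    constructor
    · rintro ⟨h1, h2, -⟩
      exact ⟨h1, h2⟩
    · rintro ⟨⟨h1, h2⟩, hr⟩
      exact ⟨⟨h1, h2⟩, hr, Srow_lt (mem_skewCells.1 h1) (mem_skewCells.1 h2) hr⟩
  -- part 3 : the tableau S0
  have hS0 : invNum α β (S0 α β) + (α.length - β.length).choose 3 =
      (∑ i ∈ Finset.range β.length, (part α i - part β i).choose 2) +
        (∑ i ∈ Finset.Ico β.length α.length, (part α i + i - β.length).choose 2) := by
    have hsplit := split_inv (skewCells α β) (S0 α β)
      (fun p hp q hq h => S0_inj (mem_skewCells.1 hp) (mem_skewCells.1 hq) h)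
    have hanti := anti_card α β
    have hstar := star_identity (β := β) hα hm
    have hrows := card_skewCells_rows α β
    have hinv : invNum α β (S0 α β) = ((skewCells α β ×ˢ skewCells α β).filter
        fun p => readBefore p.1 p.2 ∧ S0 α β p.2 < S0 α β p.1).card := rfl
    rw [hrows] at hsplit
    omega
  refine ⟨?_, hSrow, hS0, by omega⟩
  rintro S T hS hT hTS ⟨i, hi1, hi2, hpi⟩
  exact step_inv hN S T hS hT hTS i hpi

end ImmaculateSkew
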